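/- Let E₁ and E₂ be real vector spaces of finite dimensions n and m respectively, let E := E₁ × E₂ with canonical projections p₁ : E → E₁ and p₂ : E → E₂, let μ be a nonzero alternating n-form on E₁, and let α be an alternating m-form on E. Define the alternating m-form α̃ on E by α̃((u₁,v₁),…,(uₘ,vₘ)) := α((0,v₁),…,(0,vₘ)). Then p₁*μ ∧ α = p₁*μ ∧ α̃ as alternating (n+m)-forms on E. -/

import Mathlib

/-- The wedge product of a real-valued alternating `n`-form and a real-valued alternating
`m`-form, with the shuffle (determinant) convention. -/
noncomputable def wedgeProduct {E : Type*} [AddCommGroup E] [Module ℝ E] {n m : ℕ}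
    (ω : E [⋀^Fin n]→ₗ[ℝ] ℝ) (η : E [⋀^Fin m]→ₗ[ℝ] ℝ) : E [⋀^Fin (n + m)]→ₗ[ℝ] ℝ :=
  (TensorProduct.lid ℝ ℝ).toLinearMap.compAlternatingMap
    ((ω.domCoprod η).domDomCongr finSumFinEquiv)

open AlternatingMap in
/-- Key lemma: each shuffle summand of `(μ ∘ p₁) ∧ α` agrees for `α` and `β` as soon as
`α` and `β` agree on families with vanishing first components and the set of arguments with
nonvanishing first component injects into `Fin n`. -/
lemma summand_congr_aux {E₁ E₂ : Type*} [AddCommGroup E₁] [Module ℝ E₁]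
    [AddCommGroup E₂] [Module ℝ E₂] {n m : ℕ}
    (μ : E₁ [⋀^Fin n]→ₗ[ℝ] ℝ) (α β : (E₁ × E₂) [⋀^Fin m]→ₗ[ℝ] ℝ)
    (hαβ : ∀ x : Fin m → E₁ × E₂, (∀ j, (x j).1 = 0) → α x = β x)
    (v : Fin n ⊕ Fin m → E₁ × E₂)
    (f : {k : Fin n ⊕ Fin m // (v k).1 ≠ 0} → Fin n) (hf : Function.Injective f)
    (σ : Equiv.Perm.ModSumCongr (Fin n) (Fin m)) :
    domCoprod.summand (μ.compLinearMap (LinearMap.fst ℝ E₁ E₂)) α σ v =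
      domCoprod.summand (μ.compLinearMap (LinearMap.fst ℝ E₁ E₂)) β σ v := by
  induction σ using Quotient.inductionOn with
  | h σ =>
    rw [domCoprod.summand_mk'', domCoprod.summand_mk'']
    simp only [MultilinearMap.smul_apply, MultilinearMap.domDomCongr_apply,
      MultilinearMap.domCoprod_apply, AlternatingMap.coe_compLinearMap,
      AlternatingMap.coe_multilinearMap, Function.comp_apply, LinearMap.fst_apply]
    by_cases h : ∀ i : Fin n, (v (σ (Sum.inl i))).1 ≠ 0
    · -- all μ-arguments have nonzero first component; pigeonhole forces the α-arguments
      -- to have zero first component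
      congr 2
      refine hαβ _ fun j => ?_
      by_contra hj
      -- the map `g : Fin n → S` is surjective
      set g : Fin n → {k : Fin n ⊕ Fin m // (v k).1 ≠ 0} := fun i => ⟨σ (Sum.inl i), h i⟩ with hg
      have hginj : Function.Injective g := fun i i' hii' => by
        have := congrArg Subtype.val hii'
        simpa using σ.injective this
      have hfg : Function.Bijective (f ∘ g) :=
        Finite.injective_iff_bijective.mp (hf.comp hginj)
      have hgsurj : Function.Surjective g := by
        intro s
        obtain ⟨i, hi⟩ := hfg.surjective (f s)
        exact ⟨i, hf hi⟩
      obtain ⟨i, hi⟩ := hgsurj ⟨σ (Sum.inr j), hj⟩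
      have : σ (Sum.inl i) = σ (Sum.inr j) := congrArg Subtype.val hi
      simpa using σ.injective this
    · -- some μ-argument has zero first component, so both sides vanish
      push_neg at h
      obtain ⟨i, hi⟩ := h
      rw [μ.map_coord_zero i hi]
      simp

/-- Let `E₁`, `E₂` be real vector spaces of finite dimensions `n`, `m`, let `E := E₁ × E₂`
with canonical projections `p₁`, `p₂`, let `μ` be a nonzero alternating `n`-form on `E₁`
and let `α` be an alternating `m`-form on `E`.  Define `α̃` by
`α̃((u₁,v₁),…,(uₘ,vₘ)) := α((0,v₁),…,(0,vₘ))`.  Then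
`p₁*μ ∧ α = p₁*μ ∧ α̃` as alternating `(n+m)`-forms on `E`. -/
theorem wedge_pullback_fst_eq {n m : ℕ}
    {E₁ : Type*} [AddCommGroup E₁] [Module ℝ E₁] [FiniteDimensional ℝ E₁]
    {E₂ : Type*} [AddCommGroup E₂] [Module ℝ E₂] [FiniteDimensional ℝ E₂]
    (hn : Module.finrank ℝ E₁ = n) (hm : Module.finrank ℝ E₂ = m)
    (μ : E₁ [⋀^Fin n]→ₗ[ℝ] ℝ) (hμ : μ ≠ 0)
    (α : (E₁ × E₂) [⋀^Fin m]→ₗ[ℝ] ℝ) :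
    wedgeProduct (μ.compLinearMap (LinearMap.fst ℝ E₁ E₂)) α =
      wedgeProduct (μ.compLinearMap (LinearMap.fst ℝ E₁ E₂))
        (α.compLinearMap ((LinearMap.inr ℝ E₁ E₂).comp (LinearMap.snd ℝ E₁ E₂))) := by
  classical
  set β := α.compLinearMap ((LinearMap.inr ℝ E₁ E₂).comp (LinearMap.snd ℝ E₁ E₂)) with hβ
  have hαβ : ∀ x : Fin m → E₁ × E₂, (∀ j, (x j).1 = 0) → α x = β x := by
    intro x hx
    rw [hβ, AlternatingMap.compLinearMap_apply]
    congr 1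
    funext j
    simp only [LinearMap.coe_comp, Function.comp_apply, LinearMap.snd_apply,
      LinearMap.inr_apply]
    exact Prod.ext (hx j) rfl
  let b₁ := Module.finBasisOfFinrankEq ℝ E₁ hn
  let b₂ := Module.finBasisOfFinrankEq ℝ E₂ hm
  refine Module.Basis.ext_alternating (b₁.prod b₂) fun v hv => ?_
  simp only [wedgeProduct, LinearMap.compAlternatingMap_apply,
    AlternatingMap.domDomCongr_apply]
  congr 1
  set w : Fin n ⊕ Fin m → E₁ × E₂ :=
    (fun i => (b₁.prod b₂) (v i)) ∘ ⇑finSumFinEquiv with hw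
  -- arguments with nonzero first component come from `Sum.inl`
  have hex : ∀ k : {k : Fin n ⊕ Fin m // (w k).1 ≠ 0},
      ∃ i : Fin n, v (finSumFinEquiv k.1) = Sum.inl i := by
    rintro ⟨k, hk⟩
    rcases h : v (finSumFinEquiv k) with i | j
    · exact ⟨i, rfl⟩
    · exfalso
      apply hk
      simp only [hw, Function.comp_apply, h]
      exact b₁.prod_apply_inr_fst b₂ j
  let f : {k : Fin n ⊕ Fin m // (w k).1 ≠ 0} → Fin n := fun k => (hex k).choose
  have hfspec : ∀ k, v (finSumFinEquiv k.1) = Sum.inl (f k) := fun k => (hex k).choose_spec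
  have hf : Function.Injective f := by
    intro k k' hkk'
    have : v (finSumFinEquiv k.1) = v (finSumFinEquiv k'.1) := by
      rw [hfspec k, hfspec k', hkk']
    exact Subtype.ext (finSumFinEquiv.injective (hv this))
  have : ∀ σ : Equiv.Perm.ModSumCongr (Fin n) (Fin m),
      AlternatingMap.domCoprod.summand (μ.compLinearMap (LinearMap.fst ℝ E₁ E₂)) α σ w =
      AlternatingMap.domCoprod.summand (μ.compLinearMap (LinearMap.fst ℝ E₁ E₂)) β σ w :=
    summand_congr_aux μ α β hαβ w f hf
  show (μ.compLinearMap (LinearMap.fst ℝ E₁ E₂)).domCoprod α w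
      = (μ.compLinearMap (LinearMap.fst ℝ E₁ E₂)).domCoprod β w
  rw [AlternatingMap.domCoprod_apply, AlternatingMap.domCoprod_apply,
    MultilinearMap.sum_apply, MultilinearMap.sum_apply]
  exact Finset.sum_congr rfl fun σ _ => this σ
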